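/- Fix X ∈ ℝ^{n×p} of the form X = Q + yμᵀ where Q ∈ ℝ^{n×p} has full row rank, y ∈ {-1,1}^n, μ ∈ ℝ^p. Let A = QQᵀ, ν = Qμ, and let μ_⊥ = (I_p − QᵀA⁻¹Q)μ be the projection of μ onto the orthogonal complement of the row space of Q. For clean labels (ŷ = y), the minimum-norm interpolator w_MNI = Xᵀ(XXᵀ)⁻¹y satisfies S·w_MNI = (1 + νᵀA⁻¹y)·QᵀA⁻¹y + (yᵀA⁻¹y)·μ_⊥ and S·μᵀw_MNI = (yᵀA⁻¹y)‖μ_⊥‖² + (1 + νᵀA⁻¹y)·νᵀA⁻¹y, where S = (1 + νᵀA⁻¹y)² + ‖μ_⊥‖²·(yᵀA⁻¹y). -/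
import Mathlib

open Matrix

private lemma vmv_mulVec {n p : ℕ} (u : Fin n → ℝ) (v x : Fin p → ℝ) :
    (Matrix.vecMulVec u v) *ᵥ x = (v ⬝ᵥ x) • u := by
  ext i
  simp only [Matrix.mulVec, Matrix.vecMulVec_apply, dotProduct, Pi.smul_apply,
    smul_eq_mul, Finset.sum_mul]
  exact Finset.sum_congr rfl (fun j _ => by ring)

private lemma vmv_transpose {n p : ℕ} (y : Fin n → ℝ) (μ : Fin p → ℝ) :
    (vecMulVec y μ)ᵀ = vecMulVec μ y := by
  ext i j; simp [vecMulVec_apply, mul_comm]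

private lemma dot_symm {n : ℕ} (M : Matrix (Fin n) (Fin n) ℝ) (hM : Mᵀ = M)
    (u v : Fin n → ℝ) : u ⬝ᵥ M *ᵥ v = v ⬝ᵥ M *ᵥ u := by
  rw [Matrix.dotProduct_mulVec, ← Matrix.mulVec_transpose, hM, dotProduct_comm]

private lemma isUnit_of_rank_eq {n : ℕ} (A : Matrix (Fin n) (Fin n) ℝ) (h : A.rank = n) :
    IsUnit A := by
  rw [← Matrix.mulVec_injective_iff_isUnit]
  have hsurj : Function.Surjective A.mulVecLin := by
    rw [← LinearMap.range_eq_top]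
    apply Submodule.eq_top_of_finrank_eq
    rw [show Module.finrank ℝ (LinearMap.range A.mulVecLin) = A.rank from rfl, h,
      Module.finrank_pi, Fintype.card_fin]
  have hinj : Function.Injective A.mulVecLin :=
    (LinearMap.injective_iff_surjective).mpr hsurj
  exact fun u v huv => hinj (by simpa [Matrix.mulVecLin_apply] using huv)

private lemma isUnit_of_ker {n : ℕ} (M : Matrix (Fin n) (Fin n) ℝ)
    (h : ∀ x, M *ᵥ x = 0 → x = 0) : IsUnit M := by
  rw [Matrix.isUnit_iff_isUnit_det, isUnit_iff_ne_zero]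
  intro hdet
  obtain ⟨v, hv, hv0⟩ := (Matrix.exists_mulVec_eq_zero_iff).mpr hdet
  exact hv (h v hv0)

set_option maxHeartbeats 1000000 in
theorem stmt_13 {n p : ℕ} (Q : Matrix (Fin n) (Fin p) ℝ) (hQ : Q.rank = n)
    (y : Fin n → ℝ) (hy : ∀ i, y i = 1 ∨ y i = -1)
    (μ : Fin p → ℝ)
    (X : Matrix (Fin n) (Fin p) ℝ) (hX : X = Q + Matrix.vecMulVec y μ)
    (A : Matrix (Fin n) (Fin n) ℝ) (hA : A = Q * Qᵀ)
    (ν : Fin n → ℝ) (hν : ν = Q.mulVec μ)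
    (mp : Fin p → ℝ) (hmp : mp = μ - Qᵀ.mulVec (A⁻¹.mulVec (Q.mulVec μ)))
    (S : ℝ)
    (hS : S = (1 + ν ⬝ᵥ A⁻¹.mulVec y) ^ 2 + (mp ⬝ᵥ mp) * (y ⬝ᵥ A⁻¹.mulVec y))
    (w : Fin p → ℝ) (hw : w = Xᵀ.mulVec ((X * Xᵀ)⁻¹.mulVec y)) :
    S • w = (1 + ν ⬝ᵥ A⁻¹.mulVec y) • Qᵀ.mulVec (A⁻¹.mulVec y)
            + (y ⬝ᵥ A⁻¹.mulVec y) • mp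
    ∧ S * (μ ⬝ᵥ w) = (y ⬝ᵥ A⁻¹.mulVec y) * (mp ⬝ᵥ mp)
        + (1 + ν ⬝ᵥ A⁻¹.mulVec y) * (ν ⬝ᵥ A⁻¹.mulVec y) := by
  have hAt : Aᵀ = A := by rw [hA, Matrix.transpose_mul, Matrix.transpose_transpose]
  have hAu : IsUnit A := isUnit_of_rank_eq A
    (by rw [hA, Matrix.rank_self_mul_transpose, hQ])
  have hAd : IsUnit A.det := (Matrix.isUnit_iff_isUnit_det A).mp hAu
  have hAiA : ∀ v, A⁻¹ *ᵥ (A *ᵥ v) = v := fun v => by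
    rw [Matrix.mulVec_mulVec, Matrix.nonsing_inv_mul _ hAd, Matrix.one_mulVec]
  have hAAi : ∀ v, A *ᵥ (A⁻¹ *ᵥ v) = v := fun v => by
    rw [Matrix.mulVec_mulVec, Matrix.mul_nonsing_inv _ hAd, Matrix.one_mulVec]
  have hAit : A⁻¹ᵀ = A⁻¹ := by rw [Matrix.transpose_nonsing_inv, hAt]
  set a := A⁻¹ *ᵥ y with ha
  set b := A⁻¹ *ᵥ ν with hb
  set t := ν ⬝ᵥ a with htdef
  set s := y ⬝ᵥ a with hsdef
  set c := μ ⬝ᵥ μ with hcdef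
  set r := ν ⬝ᵥ b with hrdef
  have hyb : y ⬝ᵥ b = t := by rw [hb, htdef, ha, dot_symm A⁻¹ hAit]
  have hQQt : ∀ v, Q *ᵥ (Qᵀ *ᵥ v) = A *ᵥ v := fun v => by
    rw [Matrix.mulVec_mulVec, ← hA]
  have hQa : Q *ᵥ (Qᵀ *ᵥ a) = y := by rw [hQQt, ha, hAAi]
  have hQb : Q *ᵥ (Qᵀ *ᵥ b) = ν := by rw [hQQt, hb, hAAi]
  have hdQ : ∀ v, μ ⬝ᵥ (Qᵀ *ᵥ v) = ν ⬝ᵥ v := fun v => by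
    rw [Matrix.mulVec_transpose, dotProduct_comm, ← Matrix.dotProduct_mulVec, ← hν,
      dotProduct_comm]
  have hmp' : mp = μ - Qᵀ *ᵥ b := by rw [hmp, ← hν, ← hb]
  have hμmp : μ ⬝ᵥ mp = c - r := by
    rw [hmp', dotProduct_sub, hdQ, ← hcdef, ← hrdef]
  have hQtbQtb : (Qᵀ *ᵥ b) ⬝ᵥ (Qᵀ *ᵥ b) = r := by
    rw [Matrix.dotProduct_mulVec, Matrix.vecMul_transpose, hQb, hrdef]
  have hmpmp : mp ⬝ᵥ mp = c - r := by
    rw [hmp', sub_dotProduct, dotProduct_sub, dotProduct_sub, hQtbQtb,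
      dotProduct_comm (Qᵀ *ᵥ b) μ, hdQ, ← hcdef, ← hrdef]
    ring
  have hQmp : Q *ᵥ mp = 0 := by
    rw [hmp', Matrix.mulVec_sub, hQb, ← hν, sub_self]
  have hXtv : ∀ v, Xᵀ *ᵥ v = Qᵀ *ᵥ v + (y ⬝ᵥ v) • μ := fun v => by
    rw [hX, Matrix.transpose_add, vmv_transpose, Matrix.add_mulVec, vmv_mulVec]
  have hXv : ∀ v, X *ᵥ v = Q *ᵥ v + (μ ⬝ᵥ v) • y := fun v => by
    rw [hX, Matrix.add_mulVec, vmv_mulVec]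
  have key1 : Xᵀ *ᵥ ((1 + t) • a - s • b) = (1 + t) • (Qᵀ *ᵥ a) + s • mp := by
    rw [hXtv, Matrix.mulVec_sub, Matrix.mulVec_smul, Matrix.mulVec_smul,
      dotProduct_sub, dotProduct_smul, dotProduct_smul, ← hsdef, hyb, hmp']
    simp only [smul_eq_mul]
    module
  have key2 : (X * Xᵀ) *ᵥ ((1 + t) • a - s • b) = S • y := by
    rw [← Matrix.mulVec_mulVec, key1, hXv, Matrix.mulVec_add, Matrix.mulVec_smul,
      Matrix.mulVec_smul, hQa, hQmp, dotProduct_add, dotProduct_smul, dotProduct_smul,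
      hdQ, ← htdef, hμmp, hS, hmpmp]
    simp only [smul_eq_mul, smul_zero]
    module
  have hs_nonneg : 0 ≤ s := by
    have : s = (Qᵀ *ᵥ a) ⬝ᵥ (Qᵀ *ᵥ a) := by
      rw [Matrix.dotProduct_mulVec, Matrix.vecMul_transpose, hQa, hsdef,
        dotProduct_comm]
    rw [this]
    exact Finset.sum_nonneg fun i _ => mul_self_nonneg _
  have hm_nonneg : 0 ≤ mp ⬝ᵥ mp := Finset.sum_nonneg fun i _ => mul_self_nonneg _
  by_cases hS0 : S = 0
  · -- degenerate case: both sides vanish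
    have h1t : 1 + t = 0 := by nlinarith [sq_nonneg (1 + t), mul_nonneg hm_nonneg hs_nonneg]
    have hms : (mp ⬝ᵥ mp) * s = 0 := by nlinarith [sq_nonneg (1 + t)]
    have hsmp : s • mp = 0 := by
      rcases mul_eq_zero.mp hms with h | h
      · rw [dotProduct_self_eq_zero.mp h, smul_zero]
      · rw [h, zero_smul]
    constructor
    · rw [hS0, zero_smul, h1t, zero_smul, zero_add, hsmp]
    · rw [hS0, zero_mul, h1t, zero_mul, add_zero]
      rcases mul_eq_zero.mp hms with h | h
      · rw [h, mul_zero]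
      · rw [h, zero_mul]
  · -- invertible case
    have hMu : IsUnit (X * Xᵀ) := by
      apply isUnit_of_ker
      intro x hx
      have hXx : Xᵀ *ᵥ x = 0 := by
        have h0 : (Xᵀ *ᵥ x) ⬝ᵥ (Xᵀ *ᵥ x) = 0 := by
          rw [Matrix.dotProduct_mulVec, Matrix.vecMul_transpose, Matrix.mulVec_mulVec, hx,
            zero_dotProduct]
        exact dotProduct_self_eq_zero.mp h0
      rw [hXtv] at hXx
      set k := y ⬝ᵥ x with hk
      have h1 : A *ᵥ x + k • ν = 0 := by
        have := congrArg (fun v => Q *ᵥ v) hXx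
        simpa only [Matrix.mulVec_add, Matrix.mulVec_smul, hQQt, ← hν,
          Matrix.mulVec_zero] using this
      have hx_eq : x = -(k • b) := by
        have hAx : A *ᵥ x = -(k • ν) := by
          rw [eq_neg_iff_add_eq_zero]; exact h1
        calc x = A⁻¹ *ᵥ (A *ᵥ x) := (hAiA x).symm
        _ = -(k • b) := by rw [hAx, hb]; simp [Matrix.mulVec_neg, Matrix.mulVec_smul]
      have h2 : ν ⬝ᵥ x + k * c = 0 := by
        have := congrArg (fun v => μ ⬝ᵥ v) hXx
        simpa only [dotProduct_add, dotProduct_smul, hdQ, dotProduct_zero, smul_eq_mul,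
          mul_comm, ← hcdef] using this
      have hνx : ν ⬝ᵥ x = -(k * r) := by
        rw [hx_eq, dotProduct_neg, dotProduct_smul, smul_eq_mul, ← hrdef]
      have hyx : y ⬝ᵥ x = -(k * t) := by
        conv_lhs => rw [hx_eq]
        rw [dotProduct_neg, dotProduct_smul, smul_eq_mul, hyb]
      have hk1t : k * (1 + t) = 0 := by linear_combination hk.trans hyx
      have hkcr : k * (c - r) = 0 := by
        rw [hνx] at h2; linear_combination h2
      by_cases hk0 : k = 0
      · rw [hx_eq, hk0, zero_smul, neg_zero]
      · exfalso
        have h1t : 1 + t = 0 := by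
          rcases mul_eq_zero.mp hk1t with h | h
          · exact absurd h hk0
          · exact h
        have hcr : c - r = 0 := by
          rcases mul_eq_zero.mp hkcr with h | h
          · exact absurd h hk0
          · exact h
        apply hS0
        rw [hS, hmpmp, h1t, hcr]
        ring
    have hMd : IsUnit (X * Xᵀ).det := (Matrix.isUnit_iff_isUnit_det _).mp hMu
    have hz0 : (X * Xᵀ)⁻¹ *ᵥ ((X * Xᵀ) *ᵥ ((1 + t) • a - s • b)) = (1 + t) • a - s • b := by
      rw [Matrix.mulVec_mulVec, Matrix.nonsing_inv_mul _ hMd, Matrix.one_mulVec]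
    rw [key2, Matrix.mulVec_smul] at hz0
    have hz : (X * Xᵀ)⁻¹ *ᵥ y = S⁻¹ • ((1 + t) • a - s • b) := by
      rw [eq_inv_smul_iff₀ hS0]; exact hz0
    have hw' : w = S⁻¹ • ((1 + t) • (Qᵀ *ᵥ a) + s • mp) := by
      rw [hw, show (X * Xᵀ)⁻¹.mulVec y = (X * Xᵀ)⁻¹ *ᵥ y from rfl, hz,
        Matrix.mulVec_smul, key1]
    constructor
    · rw [hw', smul_smul, mul_inv_cancel₀ hS0, one_smul]
    · rw [hw', dotProduct_smul, dotProduct_add, dotProduct_smul, dotProduct_smul,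
        hdQ, ← htdef, hμmp, hmpmp]
      simp only [smul_eq_mul]
      field_simp
      ring
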